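/- The zigzag poset Z is not expressible. -/

import Mathlib

open scoped NNReal

/-- The join of two posets: underlying set the disjoint union, with every
element of the first below every element of the second. -/
def Join (α β : Type) : Type := α ⊕ β

/-- Package a sum element as an element of the join. -/
def Join.mk {α β : Type} : α ⊕ β → Join α β := id

/-- Unpack an element of the join. -/
def Join.out {α β : Type} : Join α β → α ⊕ β := id

/-- The order relation of the join. -/
def joinLE {α β : Type} [LE α] [LE β] : α ⊕ β → α ⊕ β → Prop
  | .inl a, .inl a' => a ≤ a'
  | .inr b, .inr b' => b ≤ b'
  | .inl _, .inr _ => True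
  | .inr _, .inl _ => False

instance Join.instPartialOrder {α β : Type} [PartialOrder α] [PartialOrder β] :
    PartialOrder (Join α β) where
  le x y := joinLE (Join.out x) (Join.out y)
  le_refl x := by rcases hx : Join.out x with a | b <;> simp [hx, joinLE]
  le_trans x y z hxy hyz := by
    rcases hx : Join.out x with a | a <;> rcases hy : Join.out y with b | b <;>
      rcases hz : Join.out z with c | c <;>
      simp_all [joinLE] <;> exact le_trans hxy hyz
  le_antisymm x y hxy hyx := by
    have : Join.out x = Join.out y := by
      rcases hx : Join.out x with a | a <;> rcases hy : Join.out y with b | b <;>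
        simp_all [joinLE] <;> exact le_antisymm hxy hyx
    exact this

/-- The disjoint-union partial order on a sum type (no cross relations). -/
def disjOrder (α β : Type) [PartialOrder α] [PartialOrder β] : PartialOrder (α ⊕ β) :=
  inferInstance

/-- The class of expressible posets: generated from empty and singleton posets by
disjoint unions and joins, closed under order isomorphism. -/
inductive Expressible : ∀ (α : Type), PartialOrder α → Prop
  | empty (α : Type) [IsEmpty α] (o : PartialOrder α) : Expressible α o
  | single (α : Type) [Unique α] (o : PartialOrder α) : Expressible α o
  | disj {α β : Type} [oa : PartialOrder α] [ob : PartialOrder β] :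
      Expressible α oa → Expressible β ob → Expressible (α ⊕ β) (disjOrder α β)
  | join {α β : Type} [oa : PartialOrder α] [ob : PartialOrder β] :
      Expressible α oa → Expressible β ob → Expressible (Join α β) Join.instPartialOrder
  | iso {α β : Type} (oa : PartialOrder α) (ob : PartialOrder β) (e : α ≃ β)
      (he : ∀ x y, oa.le x y ↔ ob.le (e x) (e y)) :
      Expressible α oa → Expressible β ob

/-- The order relation of the zigzag poset `Z` on four elements `0,1,2,3`
(thought of as `a,b,c,d`): exactly `a < b`, `c < b`, `c < d`. -/
abbrev ZLE : Fin 4 → Fin 4 → Prop := fun x y =>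
  x = y ∨ (x = 0 ∧ y = 1) ∨ (x = 2 ∧ y = 1) ∨ (x = 2 ∧ y = 3)

theorem ZLE.refl : ∀ a, ZLE a a := by decide
theorem ZLE.trans : ∀ a b c, ZLE a b → ZLE b c → ZLE a c := by decide
theorem ZLE.antisymm : ∀ a b, ZLE a b → ZLE b a → a = b := by decide

/-- The zigzag poset `Z`. -/
def ZOrder : PartialOrder (Fin 4) where
  le := ZLE
  lt a b := ZLE a b ∧ ¬ ZLE b a
  lt_iff_le_not_ge _ _ := Iff.rfl
  le_refl := ZLE.refl
  le_trans := ZLE.trans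
  le_antisymm := ZLE.antisymm

/-- A poset admits no full embedding of the zigzag `Z`: there is no injective map
from `Z` that both preserves and reflects the order. -/
def NoZFullEmbedding (α : Type) [PartialOrder α] : Prop :=
  ¬ ∃ f : Fin 4 → α, Function.Injective f ∧ ∀ x y : Fin 4, ZLE x y ↔ f x ≤ f y

/-- Lexicographic substitution of the posets `Q i` into the poset `P`. -/
def SubstOrder {ι : Type} (P : PartialOrder ι) {β : ι → Type}
    (Q : ∀ i, PartialOrder (β i)) : PartialOrder (Σ i, β i) :=
  letI := P
  letI : ∀ i, PartialOrder (β i) := Q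
  inferInstanceAs (PartialOrder (Σₗ i, β i))

/-- The tropical dependence operation: maximal chain-sum of weights over a poset. -/
noncomputable def tropBox {ι : Type} (P : PartialOrder ι) (a : ι → ℝ≥0) : ℝ≥0 :=
  sSup {s : ℝ≥0 | ∃ l : List ι, l.Chain' (fun i j => P.lt i j) ∧ s = (l.map a).sum}

/-- The discrete partial order. -/
def discreteOrder (ι : Type) : PartialOrder ι where
  le x y := x = y
  le_refl _ := rfl
  le_trans _ _ _ h h' := Eq.trans h h'
  le_antisymm _ _ h _ := h

/-- Connectivity of a poset: any two elements are joined by a zigzag of comparisons. -/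
def PosetConnected (α : Type) [PartialOrder α] : Prop :=
  ∀ x y : α, Relation.ReflTransGen (fun u v : α => u ≤ v ∨ v ≤ u) x y

lemma expr_noZ {α : Type} {o : PartialOrder α} (h : Expressible α o) :
    @NoZFullEmbedding α o := by
  induction h with
  | empty α o =>
      rintro ⟨f, -, -⟩
      exact IsEmpty.false (f 0)
  | single α o =>
      rintro ⟨f, hinj, -⟩
      have h01 : (0 : Fin 4) = 1 := hinj (Subsingleton.elim _ _)
      exact absurd h01 (by decide)
  | @disj α β oa ob ha hb iha ihb =>
      rintro ⟨f, hinj, hle⟩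
      have h01 : f 0 ≤ f 1 := (hle 0 1).mp (by decide)
      have h21 : f 2 ≤ f 1 := (hle 2 1).mp (by decide)
      have h23 : f 2 ≤ f 3 := (hle 2 3).mp (by decide)
      rcases h1 : f 1 with a1 | b1
      · have e0 : ∃ a, f 0 = Sum.inl a := by
          rcases h0 : f 0 with a | b
          · exact ⟨a, rfl⟩
          · rw [h0, h1] at h01; exact absurd h01 Sum.not_inr_le_inl
        have e2 : ∃ a, f 2 = Sum.inl a := by
          rcases h2 : f 2 with a | b
          · exact ⟨a, rfl⟩
          · rw [h2, h1] at h21; exact absurd h21 Sum.not_inr_le_inl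
        obtain ⟨a2, h2⟩ := e2
        have e3 : ∃ a, f 3 = Sum.inl a := by
          rcases h3 : f 3 with a | b
          · exact ⟨a, rfl⟩
          · rw [h2, h3] at h23; exact absurd h23 Sum.not_inl_le_inr
        have hall : ∀ j, ∃ a, f j = Sum.inl a := by
          intro j
          fin_cases j
          · exact e0
          · exact ⟨a1, h1⟩
          · exact ⟨a2, h2⟩
          · exact e3
        choose g hg using hall
        refine iha ⟨g, fun x y hxy => hinj ?_, fun x y => (hle x y).trans ?_⟩
        · rw [hg x, hg y, hxy]
        · rw [hg x, hg y]; exact Sum.inl_le_inl_iff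
      · have e0 : ∃ b, f 0 = Sum.inr b := by
          rcases h0 : f 0 with a | b
          · rw [h0, h1] at h01; exact absurd h01 Sum.not_inl_le_inr
          · exact ⟨b, rfl⟩
        have e2 : ∃ b, f 2 = Sum.inr b := by
          rcases h2 : f 2 with a | b
          · rw [h2, h1] at h21; exact absurd h21 Sum.not_inl_le_inr
          · exact ⟨b, rfl⟩
        obtain ⟨b2, h2⟩ := e2
        have e3 : ∃ b, f 3 = Sum.inr b := by
          rcases h3 : f 3 with a | b
          · rw [h2, h3] at h23; exact absurd h23 Sum.not_inr_le_inl
          · exact ⟨b, rfl⟩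
        have hall : ∀ j, ∃ b, f j = Sum.inr b := by
          intro j
          fin_cases j
          · exact e0
          · exact ⟨b1, h1⟩
          · exact ⟨b2, h2⟩
          · exact e3
        choose g hg using hall
        refine ihb ⟨g, fun x y hxy => hinj ?_, fun x y => (hle x y).trans ?_⟩
        · rw [hg x, hg y, hxy]
        · rw [hg x, hg y]; exact Sum.inr_le_inr_iff
  | @join α β oa ob ha hb iha ihb =>
      rintro ⟨f, hinj, hle⟩
      have hcmp : ∀ x y : Fin 4, ZLE x y ↔ joinLE (f x) (f y) := hle
      rcases h1 : f 1 with a1 | b1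
      · have hall : ∀ j, ∃ a, f j = Sum.inl a := by
          intro j
          rcases hj : f j with a | b
          · exact ⟨a, rfl⟩
          · have hz : ZLE 1 j := (hcmp 1 j).mpr (by rw [h1, hj]; trivial)
            rcases hz with h | ⟨h, -⟩ | ⟨h, -⟩ | ⟨h, -⟩
            · rw [← h, h1] at hj; exact absurd hj (by simp)
            · exact absurd h (by decide)
            · exact absurd h (by decide)
            · exact absurd h (by decide)
        choose g hg using hall
        refine iha ⟨g, fun x y hxy => hinj ?_, fun x y => (hcmp x y).trans ?_⟩
        · rw [hg x, hg y, hxy]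
        · rw [hg x, hg y]; exact Iff.rfl
      · rcases h3 : f 3 with a3 | b3
        · have hz : ZLE 3 1 := (hcmp 3 1).mpr (by rw [h3, h1]; trivial)
          exact absurd hz (by decide)
        · rcases h0 : f 0 with a0 | b0
          · have hz : ZLE 0 3 := (hcmp 0 3).mpr (by rw [h0, h3]; trivial)
            exact absurd hz (by decide)
          · rcases h2 : f 2 with a2 | b2
            · have hz : ZLE 2 0 := (hcmp 2 0).mpr (by rw [h2, h0]; trivial)
              exact absurd hz (by decide)
            · have hall : ∀ j, ∃ b, f j = Sum.inr b := by
                intro j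
                fin_cases j
                · exact ⟨b0, h0⟩
                · exact ⟨b1, h1⟩
                · exact ⟨b2, h2⟩
                · exact ⟨b3, h3⟩
              choose g hg using hall
              refine ihb ⟨g, fun x y hxy => hinj ?_, fun x y => (hcmp x y).trans ?_⟩
              · rw [hg x, hg y, hxy]
              · rw [hg x, hg y]; exact Iff.rfl
  | @iso α β oa ob e he ha ih =>
      rintro ⟨f, hinj, hle⟩
      refine ih ⟨fun i => e.symm (f i), e.symm.injective.comp hinj,
        fun x y => (hle x y).trans ?_⟩
      have h := he (e.symm (f x)) (e.symm (f y))
      rw [e.apply_symm_apply, e.apply_symm_apply] at h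
      exact h.symm

/-- The zigzag poset `Z` is not expressible. -/
theorem Z_not_expressible : ¬ Expressible (Fin 4) ZOrder := by
  intro h
  exact expr_noZ h ⟨id, fun a b hab => hab, fun x y => Iff.rfl⟩
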